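/- Let (M, ω, J, g) be an almost-Kähler manifold and X a vector field. Then X is holomorphic (i.e. the Lie derivative L_X J = 0) if and only if the J-anti-invariant part of the (2,0)-tensor D^g X satisfies (D^g X)⁻ = -(1/2) D^g_{JX} J (as endomorphisms of TM). -/
import Mathlib


noncomputable section

/-- An abstract model of the vector-field calculus of an almost-Kähler
manifold: `R` plays the role of the ring of smooth functions, `X` of the
module of vector fields, `act` of the derivation action of vector fields on
functions, `bracket` of the Lie bracket, `D` of the Levi-Civita connection,
`J` of the almost-complex structure, `g` of the Riemannian metric and `ω` of
the (closed) symplectic form, with `g(·,·) = ω(·, J·)`. -/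
structure AK (R : Type*) (X : Type*) [CommRing R] [Algebra ℝ R]
    [AddCommGroup X] [Module R X] where
  act : X → R → R
  bracket : X → X → X
  D : X → X → X
  J : X → X
  g : X → X → R
  ω : X → X → R
  act_addx : ∀ x y f, act (x + y) f = act x f + act y f
  act_smulx : ∀ (h : R) (x : X) (f : R), act (h • x) f = h * act x f
  act_addf : ∀ x f h, act x (f + h) = act x f + act x h
  act_deriv : ∀ x f h, act x (f * h) = act x f * h + f * act x h
  act_bracket : ∀ x y f, act (bracket x y) f = act x (act y f) - act y (act x f)
  bracket_antisymm : ∀ x y, bracket x y = - bracket y x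
  g_symm : ∀ x y, g x y = g y x
  g_add₁ : ∀ x y z, g (x + y) z = g x z + g y z
  g_add₂ : ∀ x y z, g x (y + z) = g x y + g x z
  g_smul₁ : ∀ (f : R) x y, g (f • x) y = f * g x y
  g_smul₂ : ∀ (f : R) x y, g x (f • y) = f * g x y
  g_nondeg : ∀ x, (∀ y, g x y = 0) → x = 0
  J_add : ∀ x y, J (x + y) = J x + J y
  J_smul : ∀ (f : R) x, J (f • x) = f • J x
  J_sq : ∀ x, J (J x) = - x
  compat : ∀ x y, g x y = ω x (J y)
  g_Jinv : ∀ x y, g (J x) (J y) = g x y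
  D_add₁ : ∀ x y z, D (x + y) z = D x z + D y z
  D_add₂ : ∀ x y z, D x (y + z) = D x y + D x z
  D_tensor : ∀ (f : R) x y, D (f • x) y = f • D x y
  D_leibniz : ∀ (f : R) x y, D x (f • y) = act x f • y + f • D x y
  D_torsionfree : ∀ x y, D x y - D y x = bracket x y
  D_metric : ∀ x y z, act x (g y z) = g (D x y) z + g y (D x z)
  ω_closed : ∀ x y z,
    act x (ω y z) - act y (ω x z) + act z (ω x y)
      - ω (bracket x y) z + ω (bracket x z) y - ω (bracket y z) x = 0

namespace AK

variable {R : Type*} {X : Type*} [CommRing R] [Algebra ℝ R]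
  [AddCommGroup X] [Module R X] [Module ℝ X] (C : AK R X)

/-- The Nijenhuis tensor `4N(X,Y) = [JX,JY] - [X,Y] - J[JX,Y] - J[X,JY]`. -/
def N (x y : X) : X :=
  (4 : ℝ)⁻¹ • (C.bracket (C.J x) (C.J y) - C.bracket x y
    - C.J (C.bracket (C.J x) y) - C.J (C.bracket x (C.J y)))

/-- The covariant derivative `(D_X J)(Y)` of `J`. -/
def DJ (x y : X) : X := C.D x (C.J y) - C.J (C.D x y)

/-- The Riemann curvature operator `R(X,Y)Z`. -/
def Riem (x y z : X) : X :=
  C.D x (C.D y z) - C.D y (C.D x z) - C.D (C.bracket x y) z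

variable {ι : Type*} [Fintype ι] [DecidableEq ι]

/-- The `*`-Ricci form `ρ* = R(ω)`, computed in the orthonormal frame `e`:
`ρ*(X,Y) = (1/2) ∑ᵢ g(R(X,Y)eᵢ, Jeᵢ)`. -/
def rhoStar (e : ι → X) (x y : X) : R :=
  (2 : ℝ)⁻¹ • ∑ i, C.g (C.Riem x y (e i)) (C.J (e i))

/-- The hermitian Ricci form of the canonical hermitian connection, via
`ρ^∇(X,Y) = ρ*(X,Y) - (1/4) tr(J ∘ D_X J ∘ D_Y J)` (identity (2.10)). -/
def rho (e : ι → X) (x y : X) : R :=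
  C.rhoStar e x y
    - (4 : ℝ)⁻¹ • ∑ i, C.g (C.J (C.DJ x (C.DJ y (e i)))) (e i)

/-- The hermitian scalar curvature `s^∇ = 2Λ_ω ρ^∇ = ∑ᵢ ρ^∇(eᵢ, Jeᵢ)`. -/
def scalH (e : ι → X) : R := ∑ i, C.rho e (e i) (C.J (e i))

/-- The Riemannian Laplacian `Δ f = -tr_g (D df)`. -/
def lap (e : ι → X) (f : R) : R :=
  - ∑ i, (C.act (e i) (C.act (e i) f) - C.act (C.D (e i) (e i)) f)

/-- `e` is a `g`-orthonormal frame of the module of vector fields. -/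
def IsFrame (e : ι → X) : Prop :=
  (∀ i j, C.g (e i) (e j) = if i = j then 1 else 0) ∧
    ∀ x, x = ∑ i, C.g x (e i) • e i

/-- `x` is a Killing vector field: `L_x g = 0`. -/
def Killing (x : X) : Prop :=
  ∀ y z, C.act x (C.g y z) - C.g (C.bracket x y) z - C.g y (C.bracket x z) = 0

/-- `x` is a (pseudo-)holomorphic vector field: `L_x J = 0`. -/
def Holomorphic (x : X) : Prop :=
  ∀ y, C.bracket x (C.J y) = C.J (C.bracket x y)

/-- `x` is hamiltonian with hamiltonian function `f`: `ω(x, ·) = -df`. -/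
def Hamiltonian (x : X) (f : R) : Prop := ∀ y, C.ω x y = - C.act y f

end AK

end

section Aux

namespace AKAux

variable {R : Type*} {X : Type*} [CommRing R] [Algebra ℝ R]
  [AddCommGroup X] [Module R X] (C : AK R X)

lemma J_neg (a : X) : C.J (-a) = - C.J a := by
  have h := C.J_smul (-1 : R) a
  rwa [neg_one_smul, neg_one_smul] at h

lemma J_sub (a b : X) : C.J (a - b) = C.J a - C.J b := by
  rw [sub_eq_add_neg, C.J_add, J_neg C, ← sub_eq_add_neg]

lemma g_neg₁ (a b : X) : C.g (-a) b = - C.g a b := by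
  have h := C.g_smul₁ (-1 : R) a b
  rwa [neg_one_smul, neg_one_mul] at h

lemma g_neg₂ (a b : X) : C.g a (-b) = - C.g a b := by
  have h := C.g_smul₂ (-1 : R) a b
  rwa [neg_one_smul, neg_one_mul] at h

lemma g_sub₁ (a b c : X) : C.g (a - b) c = C.g a c - C.g b c := by
  rw [sub_eq_add_neg, C.g_add₁, g_neg₁ C, ← sub_eq_add_neg]

lemma g_add₂' (a b c : X) : C.g a (b + c) = C.g a b + C.g a c := C.g_add₂ a b c

lemma D_neg₁ (a b : X) : C.D (-a) b = - C.D a b := by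
  have h := C.D_tensor (-1 : R) a b
  rwa [neg_one_smul, neg_one_smul] at h

lemma D_zero₂ (a : X) : C.D a 0 = 0 := by
  have h := C.D_add₂ a 0 0
  rw [add_zero] at h
  exact (left_eq_add.mp h)

lemma D_neg₂ (a b : X) : C.D a (-b) = - C.D a b := by
  have h := C.D_add₂ a b (-b)
  rw [add_neg_cancel, D_zero₂ C] at h
  exact (eq_neg_of_add_eq_zero_right h.symm)

lemma act_zero (a : X) : C.act a 0 = 0 := by
  have h := C.act_addf a 0 0
  rw [add_zero] at h
  exact (left_eq_add.mp h)

/-- `g(Ja, b) = -g(a, Jb)`. -/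
lemma gJ (a b : X) : C.g (C.J a) b = - C.g a (C.J b) := by
  have h := C.g_Jinv (C.J a) b
  rw [C.J_sq, g_neg₁ C] at h
  exact h.symm

lemma gJswap (a b : X) : C.g (C.J a) b = - C.g (C.J b) a := by
  rw [gJ C, C.g_symm]

/-- `ω(a,b) = g(Ja, b)`. -/
lemma omega_g (a b : X) : C.ω a b = C.g (C.J a) b := by
  have h := C.compat a (-(C.J b))
  rw [J_neg C, C.J_sq, neg_neg, g_neg₂ C] at h
  rw [← h, gJ C]

lemma tf (a b : X) : C.bracket a b = C.D a b - C.D b a :=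
  (C.D_torsionfree a b).symm

/-- skew-symmetry of `φ(x,y,z) = g((D_x J)y, z)` in the last two slots. -/
lemma phi_skew (x y z : X) : C.g (C.DJ x y) z = - C.g (C.DJ x z) y := by
  have m1 := C.D_metric x (C.J y) z
  have m2 := C.D_metric x (C.J z) y
  have h3 : C.g (C.J y) z + C.g (C.J z) y = 0 := by
    rw [gJswap C y z]; ring
  have h4 := C.act_addf x (C.g (C.J y) z) (C.g (C.J z) y)
  have h5 : C.act x (C.g (C.J y) z + C.g (C.J z) y) = 0 := by
    rw [h3, act_zero C]
  have s1 : C.g (C.J (C.D x y)) z = - C.g (C.J z) (C.D x y) := gJswap C _ _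
  have s2 : C.g (C.J (C.D x z)) y = - C.g (C.J y) (C.D x z) := gJswap C _ _
  simp only [AK.DJ, g_sub₁ C]
  linear_combination -m1 - m2 - h4 + h5 - s1 - s2

/-- `(D_x J)(Jy) = -J((D_x J)y)`. -/
lemma DJ_J₂ (x y : X) : C.DJ x (C.J y) = - C.J (C.DJ x y) := by
  simp only [AK.DJ, C.J_sq, D_neg₂ C, J_sub C, C.J_sq]
  abel

lemma phi_J23 (x y z : X) :
    C.g (C.DJ x (C.J y)) z = C.g (C.DJ x y) (C.J z) := by
  rw [DJ_J₂ C, g_neg₁ C, gJ C, neg_neg]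

lemma DJ_neg₁ (x y : X) : C.DJ (-x) y = - C.DJ x y := by
  simp only [AK.DJ, D_neg₁ C, J_neg C]
  abel

lemma DJ_neg₂ (x y : X) : C.DJ x (-y) = - C.DJ x y := by
  simp only [AK.DJ, J_neg C, D_neg₂ C]
  abel

/-- closedness of `ω` in terms of `φ`. -/
lemma phi_cyc (x y z : X) :
    C.g (C.DJ x y) z - C.g (C.DJ y x) z + C.g (C.DJ z x) y = 0 := by
  have W := C.ω_closed x y z
  simp only [omega_g C, tf C, J_sub C, g_sub₁ C] at W
  have m1 := C.D_metric x (C.J y) z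
  have m2 := C.D_metric y (C.J x) z
  have m3 := C.D_metric z (C.J x) y
  have s1 : C.g (C.J (C.D x z)) y = - C.g (C.J y) (C.D x z) := gJswap C _ _
  have s2 : C.g (C.J (C.D y z)) x = - C.g (C.J x) (C.D y z) := gJswap C _ _
  have s3 : C.g (C.J (C.D z y)) x = - C.g (C.J x) (C.D z y) := gJswap C _ _
  simp only [AK.DJ, g_sub₁ C]
  linear_combination W - m1 + m2 - m3 - s1 + s2 - s3

/-- the auxiliary trilinear form `ψ(x,y,z) = φ(Jx,y,z) - φ(x,Jy,z)`. -/
def psi (x y z : X) : R :=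
  C.g (C.DJ (C.J x) y) z - C.g (C.DJ x (C.J y)) z

lemma psiA (x y z : X) : psi C x y z = - psi C x z y := by
  unfold psi
  have h1 := phi_skew C (C.J x) y z
  have h2 := phi_J23 C x y z
  have h3 := phi_skew C x y (C.J z)
  have h4 := phi_J23 C x z y
  linear_combination h1 - h2 - h3

lemma psiB (x y z : X) : psi C x y z = - psi C y x z := by
  unfold psi
  have c1 := phi_cyc C (C.J x) y z
  have c2 := phi_cyc C (C.J y) x z
  have j3 := phi_J23 C z y x
  have s := phi_skew C z (C.J x) y
  linear_combination c1 + c2 - s - j3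

lemma psiC (x y z : X) : psi C (C.J x) (C.J y) z = psi C x y z := by
  unfold psi
  simp only [C.J_sq, DJ_neg₁ C, DJ_neg₂ C, g_neg₁ C]
  ring

lemma psiD (x y z : X) : psi C x (C.J y) (C.J z) = - psi C x y z := by
  unfold psi
  have h1 := phi_J23 C (C.J x) y (C.J z)
  have h2 := phi_J23 C x y z
  simp only [C.J_sq, DJ_neg₂ C, g_neg₁ C, g_neg₂ C] at h1 ⊢
  linear_combination h1 - h2

lemma psi_zero (x y z : X) : psi C x y z = 0 := by
  have e1 : psi C x (C.J y) (C.J z) = - psi C x y z := psiD C x y z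
  have e2 : psi C x (C.J y) (C.J z) = psi C x y z := by
    calc psi C x (C.J y) (C.J z) = - psi C (C.J y) x (C.J z) := psiB C _ _ _
    _ = psi C (C.J y) (C.J z) x := by rw [psiA C (C.J y) x (C.J z)]; ring
    _ = psi C y z x := psiC C _ _ _
    _ = - psi C y x z := by rw [psiA C y z x]
    _ = psi C x y z := by rw [psiB C y x z]; ring
  have h2 : (2 : ℝ) • psi C x y z = 0 := by
    rw [two_smul]
    linear_combination e1 - e2
  have h3 := congrArg (fun t => (2 : ℝ)⁻¹ • t) h2
  simpa [smul_smul] using h3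

/-- Key identity (almost-Kähler): `D_{Jx} J = - J ∘ D_x J`. -/
lemma DJJ (x y : X) : C.DJ (C.J x) y = - C.J (C.DJ x y) := by
  have key : ∀ z, C.g (C.DJ (C.J x) y + C.J (C.DJ x y)) z = 0 := by
    intro z
    have hp := psi_zero C x y z
    unfold psi at hp
    rw [DJ_J₂ C, g_neg₁ C] at hp
    rw [C.g_add₁]
    linear_combination hp
  have h := C.g_nondeg _ key
  exact eq_neg_of_add_eq_zero_left h

end AKAux

end Aux


/-- Lemma 2.2: a vector field `X` on an almost-Kähler manifold is holomorphic
(`L_X J = 0`) if and only if the `J`-anti-invariant part of `D^g X`, namely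
`(D^g X)⁻ = (1/2)(D^g X + J ∘ D^g X ∘ J)`, equals `-(1/2) D^g_{JX} J`. -/
theorem holomorphic_iff_anti_invariant_part_eq
    {R : Type*} {X : Type*} [CommRing R] [Algebra ℝ R]
    [AddCommGroup X] [Module R X] [Module ℝ X] [IsScalarTower ℝ R X]
    (C : AK R X) (x : X) :
    C.Holomorphic x ↔
      ∀ y, (2 : ℝ)⁻¹ • (C.D y x + C.J (C.D (C.J y) x))
        = -((2 : ℝ)⁻¹ • C.DJ (C.J x) y) := by
  have half : ∀ u v : X, ((2:ℝ)⁻¹ • u = (2:ℝ)⁻¹ • v) ↔ u = v := by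
    intro u v
    constructor
    · intro h
      have h2 := congrArg (fun t => (2:ℝ) • t) h
      simpa [smul_smul] using h2
    · intro h; rw [h]
  constructor
  · intro h y
    rw [AKAux.DJJ C x y, smul_neg, neg_neg, half]
    have hb : C.bracket x (C.J y) = C.J (C.bracket x y) := h y
    rw [AKAux.tf C, AKAux.tf C, AKAux.J_sub C] at hb
    have hb2 := congrArg C.J hb
    rw [AKAux.J_sub C, AKAux.J_sub C, C.J_sq, C.J_sq] at hb2
    simp only [AK.DJ, AKAux.J_sub C, C.J_sq]
    linear_combination (norm := abel) -hb2
  · intro h y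
    have h1 := h y
    rw [AKAux.DJJ C x y, smul_neg, neg_neg, half] at h1
    rw [AKAux.tf C, AKAux.tf C, AKAux.J_sub C]
    have h2 := congrArg C.J h1
    rw [C.J_add, C.J_sq, C.J_sq] at h2
    simp only [AK.DJ, AKAux.J_sub C, C.J_sq] at h2
    linear_combination (norm := abel) h2
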